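/- Let Π and G be profinite groups, π : Π → G a continuous surjective homomorphism with kernel Δ, and (N_i)_{i∈ℕ} a descending sequence of closed subgroups of Π, each normal in Π and contained in Δ, with ⋂_{i∈ℕ} N_i = {1}. Let α, β : G → Π be continuous sections of π. If for each i there exists δ_i ∈ Δ such that δ_i·α(g)·δ_i⁻¹·β(g)⁻¹ ∈ N_i for all g ∈ G, then there exists δ ∈ Δ with δ·α(g)·δ⁻¹ = β(g) for all g ∈ G. -/

import Mathlib

/-- Let `π : P → G` be a continuous surjective homomorphism of profinite
groups with kernel `Δ = π.ker`, and `(N i)` a descending sequence of closed subgroups of `P`,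
each normal in `P` and contained in `Δ`, with `⋂ i, N i = 1`. If two continuous sections
`α, β` of `π` are conjugate by an element of `Δ` modulo every `N i`, then they are conjugate
by an element of `Δ`. -/
theorem conj_section_of_conj_mod_descending_closed_normal
    {P G : Type*} [Group P] [TopologicalSpace P] [IsTopologicalGroup P]
    [CompactSpace P] [T2Space P] [TotallyDisconnectedSpace P]
    [Group G] [TopologicalSpace G] [IsTopologicalGroup G]
    [CompactSpace G] [T2Space G] [TotallyDisconnectedSpace G]
    (π : P →* G) (hπcont : Continuous π) (hπsurj : Function.Surjective π)
    (N : ℕ → Subgroup P)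
    (hNclosed : ∀ i, IsClosed (N i : Set P))
    (hNnormal : ∀ i, (N i).Normal)
    (hNker : ∀ i, N i ≤ π.ker)
    (hNdesc : ∀ i, N (i + 1) ≤ N i)
    (hNint : (⨅ i, N i) = ⊥)
    (α β : G →* P) (hαcont : Continuous α) (hβcont : Continuous β)
    (hα : ∀ g, π (α g) = g) (hβ : ∀ g, π (β g) = g)
    (hloc : ∀ i, ∃ δ ∈ π.ker, ∀ g, δ * α g * δ⁻¹ * (β g)⁻¹ ∈ N i) :
    ∃ δ ∈ π.ker, ∀ g, δ * α g * δ⁻¹ = β g := by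
  set C : ℕ → Set P := fun i =>
    (π.ker : Set P) ∩ ⋂ g, (fun δ => δ * α g * δ⁻¹ * (β g)⁻¹) ⁻¹' (N i) with hC
  have hCclosed : ∀ i, IsClosed (C i) := by
    intro i
    refine ((isClosed_singleton.preimage hπcont)).inter (isClosed_iInter fun g => ?_)
    exact (hNclosed i).preimage (by continuity)
  have hCne : ∀ i, (C i).Nonempty := by
    intro i
    obtain ⟨δ, hδ, h⟩ := hloc i
    exact ⟨δ, hδ, Set.mem_iInter.2 fun g => h g⟩
  have hCdesc : ∀ i, C (i + 1) ⊆ C i := by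
    intro i δ hδ
    exact ⟨hδ.1, Set.mem_iInter.2 fun g => hNdesc i (Set.mem_iInter.1 hδ.2 g)⟩
  obtain ⟨δ, hδ⟩ := IsCompact.nonempty_iInter_of_sequence_nonempty_isCompact_isClosed C
    hCdesc hCne ((hCclosed 0).isCompact) hCclosed
  simp only [Set.mem_iInter] at hδ
  refine ⟨δ, (hδ 0).1, fun g => ?_⟩
  have : δ * α g * δ⁻¹ * (β g)⁻¹ ∈ ⨅ i, N i :=
    Subgroup.mem_iInf.2 fun i => Set.mem_iInter.1 (hδ i).2 g
  rw [hNint, Subgroup.mem_bot] at this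
  rw [mul_inv_eq_one] at this
  exact this
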